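/- Lemma 1 (Binding low-type incentive constraints without loss). Let v be any mechanism satisfying all incentive constraints and the firm break-even condition. Then there exists a mechanism v̄ satisfying all incentive constraints and the firm break-even condition such that, for every t ∈ {2,…,T−1} and every history H^{t−1}, the low-type incentive constraint holds with equality, and the agent's expected payoff under v̄ is no lower than under v. -/

import Mathlib

/-- A policy for Problem IV with horizon `T` and `N` types, for a fixed initial type.
Paths `ω : Fin (T-2) → Fin N` record the type draws at dates `2,…,T-1` (coordinate `s`
is the draw at date `s+2`).  `v t ω` is the date-`t` utility; `adapted` says that for
`t ≤ T-1` it depends only on the draws at dates `2,…,t` (so `v 1` is constant and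
`v T` depends on the draws at dates `2,…,T-1`). -/
structure PolicyIV (T N : ℕ) where
  v : ℕ → (Fin (T - 2) → Fin N) → ℝ
  adapted : ∀ t : ℕ, t ≤ T - 1 → ∀ ω ω' : Fin (T - 2) → Fin N,
    (∀ s : Fin (T - 2), (s : ℕ) + 2 ≤ t → ω s = ω' s) → v t ω = v t ω'

/-- Splice two paths: keep the draws of `ω` at dates `≤ t` and of `ω'` at dates `> t`. -/
def splice (T N : ℕ) (t : ℕ) (ω ω' : Fin (T - 2) → Fin N) : Fin (T - 2) → Fin N :=
  fun s => if (s : ℕ) + 2 ≤ t then ω s else ω' s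

/-- Expectation over paths with i.i.d. coordinate weights `r`. -/
noncomputable def Epath (T N : ℕ) (r : Fin N → ℝ) (f : (Fin (T - 2) → Fin N) → ℝ) : ℝ :=
  ∑ ω : Fin (T - 2) → Fin N, (∏ s, r (ω s)) * f ω

/-- Discounting of date-`t` utility from date 2: `Π_{s=2}^{t-1} δ̃_s`. -/
noncomputable def discIV (T N : ℕ) (δ : Fin N → ℝ) (t : ℕ) (ω : Fin (T - 2) → Fin N) : ℝ :=
  ∏ s : Fin (T - 2), if (s : ℕ) + 2 < t then δ (ω s) else 1

/-- Discounting of date-`τ` utility from date `t+1`: `Π_{s=t+1}^{τ-1} δ̃_s`. -/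
noncomputable def discCont (T N : ℕ) (δ : Fin N → ℝ) (t τ : ℕ) (ω : Fin (T - 2) → Fin N) : ℝ :=
  ∏ s : Fin (T - 2), if t + 1 ≤ (s : ℕ) + 2 ∧ (s : ℕ) + 2 < τ then δ (ω s) else 1

/-- The discount factor realised at date `t` along the path `ω` (for `2 ≤ t ≤ T-1`). -/
noncomputable def deltaAt (T N : ℕ) (δ : Fin N → ℝ) (t : ℕ) (ω : Fin (T - 2) → Fin N) : ℝ :=
  ∏ s : Fin (T - 2), if (s : ℕ) + 2 = t then δ (ω s) else 1

/-- The agent's expected discounted continuation utility from date `t+1` onwards,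
after the history and report recorded in `ω` up to date `t`, with agent beliefs `q`:
`E_A[Σ_{τ=t+1}^T (Π_{s=t+1}^{τ-1} δ̃_s) v_τ]`. -/
noncomputable def contA (T N : ℕ) (δ q : Fin N → ℝ)
    (v : ℕ → (Fin (T - 2) → Fin N) → ℝ) (t : ℕ) (ω : Fin (T - 2) → Fin N) : ℝ :=
  Epath T N q (fun ω' => ∑ τ ∈ Finset.Icc (t + 1) T,
    discCont T N δ t τ (splice T N t ω ω') * v τ (splice T N t ω ω'))

/-- The agent's expected payoff: `v₁ + δ₁·E_A[Σ_{t=2}^T (Π_{s=2}^{t-1} δ̃_s) v_t]`. -/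
noncomputable def payoffIV (T N : ℕ) (δ q : Fin N → ℝ) (δ1 : ℝ) (P : PolicyIV T N) : ℝ :=
  Epath T N q (fun ω => P.v 1 ω + δ1 * ∑ t ∈ Finset.Icc 2 T, discIV T N δ t ω * P.v t ω)

/-- The firm's expected discounted cost: `φ(v₁) + E_F[Σ_{t=2}^T φ(v_t)/R^(t-1)]`. -/
noncomputable def costIV (T N : ℕ) (p : Fin N → ℝ) (φ : ℝ → ℝ) (R : ℝ) (P : PolicyIV T N) : ℝ :=
  Epath T N p (fun ω => φ (P.v 1 ω) + ∑ t ∈ Finset.Icc 2 T, φ (P.v t ω) / R ^ (t - 1))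

/-- All incentive constraints `IC(t,H,δ,δ̂)`: at every date `t ∈ {2,…,T-1}` and after
any history (the common prefix of `ω` and `ω'`), the agent with true date-`t` type
(the date-`t` coordinate of `ω`) prefers its own report to any other report (the
date-`t` coordinate of `ω'`). -/
def ICIV (T N : ℕ) (δ q : Fin N → ℝ) (P : PolicyIV T N) : Prop :=
  ∀ t : ℕ, 2 ≤ t → t ≤ T - 1 → ∀ ω ω' : Fin (T - 2) → Fin N,
    (∀ s : Fin (T - 2), (s : ℕ) + 2 < t → ω s = ω' s) →
    P.v t ω' + deltaAt T N δ t ω * contA T N δ q P.v t ω' ≤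
      P.v t ω + deltaAt T N δ t ω * contA T N δ q P.v t ω

/-- Feasibility for Problem IV: utilities bounded below by `m = u 0`, the firm
break-even condition, and all incentive constraints. -/
def FeasIV (T N : ℕ) (δ p q : Fin N → ℝ) (φ : ℝ → ℝ) (R I m : ℝ) (P : PolicyIV T N) : Prop :=
  (∀ t ∈ Finset.Icc 1 T, ∀ ω, m ≤ P.v t ω) ∧
  costIV T N p φ R P ≤ I ∧ ICIV T N δ q P

/-- In the two-type model of Section 3 the firm believes the agent is always
impatient, so the break-even condition only involves the all-low history
`L^t` (the path `fun _ => 0`): `Σ_{t=1}^T φ(v_t(L^t))/R^(t-1) ≤ I`. -/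
noncomputable def costII (T : ℕ) (φ : ℝ → ℝ) (R : ℝ) (P : PolicyIV T 2) : ℝ :=
  ∑ t ∈ Finset.Icc 1 T, φ (P.v t (fun _ => 0)) / R ^ (t - 1)

/-- Feasibility in Section 3: nonnegative utilities, all incentive constraints
(with types `![δ1, δ2]` and agent beliefs `![q1, q2]`), and firm break-even. -/
def FeasII (T : ℕ) (δ1 δ2 q1 q2 : ℝ) (φ : ℝ → ℝ) (R I : ℝ) (P : PolicyIV T 2) : Prop :=
  (∀ t ∈ Finset.Icc 1 T, ∀ ω, 0 ≤ P.v t ω) ∧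
  ICIV T 2 ![δ1, δ2] ![q1, q2] P ∧
  costII T φ R P ≤ I

namespace S6

open Finset

/-! ### Generic path-expectation lemmas -/

lemma sum_paths_prod {T N : ℕ} (h : Fin (T-2) → Fin N → ℝ) :
    ∑ ω : Fin (T-2) → Fin N, ∏ s, h s (ω s) = ∏ s, ∑ i, h s i :=
  (Fintype.prod_sum h).symm

lemma Epath_congr {T N : ℕ} (r : Fin N → ℝ) {f g : (Fin (T-2) → Fin N) → ℝ}
    (h : ∀ ω, f ω = g ω) : Epath T N r f = Epath T N r g := by
  unfold Epath; exact Finset.sum_congr rfl fun ω _ => by rw [h]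

lemma Epath_add {T N : ℕ} (r : Fin N → ℝ) (f g : (Fin (T-2) → Fin N) → ℝ) :
    Epath T N r (fun ω => f ω + g ω) = Epath T N r f + Epath T N r g := by
  unfold Epath; rw [← Finset.sum_add_distrib]
  exact Finset.sum_congr rfl fun ω _ => by ring

lemma Epath_smul {T N : ℕ} (r : Fin N → ℝ) (c : ℝ) (f : (Fin (T-2) → Fin N) → ℝ) :
    Epath T N r (fun ω => c * f ω) = c * Epath T N r f := by
  unfold Epath; rw [Finset.mul_sum]
  exact Finset.sum_congr rfl fun ω _ => by ring

lemma weights_sum {T N : ℕ} (r : Fin N → ℝ) (h1 : ∑ i, r i = 1) :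
    ∑ ω : Fin (T-2) → Fin N, (∏ s, r (ω s)) = 1 := by
  rw [sum_paths_prod (fun (_ : Fin (T-2)) (i : Fin N) => r i)]
  simp [h1]

lemma Epath_const {T N : ℕ} (r : Fin N → ℝ) (h1 : ∑ i, r i = 1) (c : ℝ) :
    Epath T N r (fun _ => c) = c := by
  unfold Epath
  rw [← Finset.sum_mul, weights_sum r h1, one_mul]

lemma Epath_prod {T N : ℕ} (r : Fin N → ℝ) (h : Fin (T-2) → Fin N → ℝ) :
    Epath T N r (fun ω => ∏ s, h s (ω s)) = ∏ s, ∑ i, r i * h s i := by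
  unfold Epath
  rw [← sum_paths_prod (fun s i => r i * h s i)]
  exact Finset.sum_congr rfl fun ω _ => by rw [Finset.prod_mul_distrib]

lemma Epath_nonneg {T N : ℕ} (r : Fin N → ℝ) (hr : ∀ i, 0 ≤ r i)
    {f : (Fin (T-2) → Fin N) → ℝ} (hf : ∀ ω, 0 ≤ f ω) : 0 ≤ Epath T N r f := by
  unfold Epath
  exact Finset.sum_nonneg fun ω _ => mul_nonneg (Finset.prod_nonneg fun s _ => hr _) (hf ω)

lemma prod_split {M : Type*} [CommMonoid M] {α : Type*} [Fintype α] [DecidableEq α]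
    (a : α) (g : α → M) : ∏ s, g s = g a * ∏ j : {j // j ≠ a}, g (j : α) := by
  rw [Fintype.prod_eq_mul_prod_compl a g]
  congr 1
  rw [← Finset.prod_subtype ({a}ᶜ : Finset α) (fun x => by simp) (fun j => g j)]

lemma Epath_split {T N : ℕ} (r : Fin N → ℝ) (h1 : ∑ i, r i = 1) (s0 : Fin (T-2))
    (f : (Fin (T-2) → Fin N) → ℝ) :
    Epath T N r f = ∑ i, r i * Epath T N r (fun ω => f (Function.update ω s0 i)) := by
  classical
  set e := Equiv.funSplitAt s0 (Fin N) with he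
  have hW : ∀ p : Fin N × ({j // j ≠ s0} → Fin N),
      (∏ s, r (e.symm p s)) = r p.1 * ∏ j : {j // j ≠ s0}, r (p.2 j) := by
    intro p
    rw [prod_split s0 (fun s => r (e.symm p s))]
    congr 1
    · congr 1; simp [he, Equiv.funSplitAt, Equiv.piSplitAt]
    · apply Finset.prod_congr rfl
      intro j _
      congr 1
      simp [he, Equiv.funSplitAt, Equiv.piSplitAt, j.2]
  have hupd : ∀ (i : Fin N) (p : Fin N × ({j // j ≠ s0} → Fin N)),
      Function.update (e.symm p) s0 i = e.symm (i, p.2) := by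
    intro i p
    funext j
    by_cases hj : j = s0
    · subst hj
      simp [he, Equiv.funSplitAt, Equiv.piSplitAt, Function.update_self]
    · simp [he, Equiv.funSplitAt, Equiv.piSplitAt, Function.update_of_ne hj, hj]
  unfold Epath
  rw [← Equiv.sum_comp e.symm (fun ω => (∏ s, r (ω s)) * f ω)]
  rw [Fintype.sum_prod_type]
  have hrhs : ∀ i : Fin N,
      (∑ ω : Fin (T-2) → Fin N, (∏ s, r (ω s)) * f (Function.update ω s0 i))
        = ∑ ρ : {j // j ≠ s0} → Fin N, (∏ j, r (ρ j)) * f (e.symm (i, ρ)) := by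
    intro i
    rw [← Equiv.sum_comp e.symm (fun ω => (∏ s, r (ω s)) * f (Function.update ω s0 i))]
    rw [Fintype.sum_prod_type]
    have : ∀ x : Fin N, ∀ ρ : {j // j ≠ s0} → Fin N,
        (∏ s, r (e.symm (x, ρ) s)) * f (Function.update (e.symm (x, ρ)) s0 i)
          = r x * ((∏ j, r (ρ j)) * f (e.symm (i, ρ))) := by
      intro x ρ
      rw [hW (x, ρ), hupd i (x, ρ)]
      ring
    calc (∑ x : Fin N, ∑ ρ : {j // j ≠ s0} → Fin N,
            (∏ s, r (e.symm (x, ρ) s)) * f (Function.update (e.symm (x, ρ)) s0 i))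
        = ∑ x : Fin N, r x * ∑ ρ : {j // j ≠ s0} → Fin N, (∏ j, r (ρ j)) * f (e.symm (i, ρ)) := by
          apply Finset.sum_congr rfl; intro x _
          rw [Finset.mul_sum]
          exact Finset.sum_congr rfl fun ρ _ => this x ρ
      _ = (∑ x : Fin N, r x) * ∑ ρ : {j // j ≠ s0} → Fin N, (∏ j, r (ρ j)) * f (e.symm (i, ρ)) := by
          rw [Finset.sum_mul]
      _ = ∑ ρ : {j // j ≠ s0} → Fin N, (∏ j, r (ρ j)) * f (e.symm (i, ρ)) := by rw [h1, one_mul]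
  calc (∑ x : Fin N, ∑ ρ : {j // j ≠ s0} → Fin N,
          (∏ s, r (e.symm (x, ρ) s)) * f (e.symm (x, ρ)))
      = ∑ x : Fin N, r x * ∑ ρ : {j // j ≠ s0} → Fin N, (∏ j, r (ρ j)) * f (e.symm (x, ρ)) := by
        apply Finset.sum_congr rfl; intro x _
        rw [Finset.mul_sum]
        apply Finset.sum_congr rfl; intro ρ _
        rw [hW (x, ρ)]; ring
    _ = ∑ i, r i * Epath T N r (fun ω => f (Function.update ω s0 i)) := by
        apply Finset.sum_congr rfl; intro x _
        rw [← hrhs x]; rfl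

end S6
namespace S6

open Finset

lemma contA_congr {T N : ℕ} (δ q : Fin N → ℝ) (v : ℕ → (Fin (T-2) → Fin N) → ℝ)
    (t : ℕ) {ω ω' : Fin (T-2) → Fin N}
    (hag : ∀ s : Fin (T-2), (s:ℕ)+2 ≤ t → ω s = ω' s) :
    contA T N δ q v t ω = contA T N δ q v t ω' := by
  unfold contA
  apply Epath_congr
  intro ω''
  have : splice T N t ω ω'' = splice T N t ω' ω'' := by
    funext s
    unfold splice
    by_cases h : (s:ℕ)+2 ≤ t
    · rw [if_pos h, if_pos h, hag s h]
    · rw [if_neg h, if_neg h]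
  rw [this]

lemma splice_last {T N : ℕ} (ω ω' : Fin (T-2) → Fin N) :
    splice T N (T-1) ω ω' = ω := by
  funext s
  unfold splice
  rw [if_pos (by have := s.isLt; omega)]

lemma contA_last {T N : ℕ} (hT : 3 ≤ T) (δ q : Fin N → ℝ) (hq : ∑ i, q i = 1)
    (v : ℕ → (Fin (T-2) → Fin N) → ℝ) (ω : Fin (T-2) → Fin N) :
    contA T N δ q v (T-1) ω = v T ω := by
  unfold contA
  have h1 : Finset.Icc (T-1+1) T = {T} := by
    ext x; simp only [Finset.mem_Icc, Finset.mem_singleton]; omega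
  have h2 : ∀ ω'' : Fin (T-2) → Fin N, (fun ω' => ∑ τ ∈ Finset.Icc (T-1+1) T,
      discCont T N δ (T-1) τ (splice T N (T-1) ω ω') * v τ (splice T N (T-1) ω ω')) ω'' = v T ω := by
    intro ω''
    show (∑ τ ∈ Finset.Icc (T-1+1) T, discCont T N δ (T-1) τ (splice T N (T-1) ω ω'')
      * v τ (splice T N (T-1) ω ω'')) = v T ω
    rw [h1, Finset.sum_singleton, splice_last]
    have : discCont T N δ (T-1) T ω = 1 := by
      unfold discCont
      apply Finset.prod_eq_one
      intro s _
      rw [if_neg (by have := s.isLt; omega)]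
    rw [this, one_mul]
  rw [Epath_congr q h2, Epath_const q hq]

lemma contA_nonneg {T N : ℕ} (δ q : Fin N → ℝ) (hδ : ∀ i, 0 ≤ δ i) (hq : ∀ i, 0 ≤ q i)
    (v : ℕ → (Fin (T-2) → Fin N) → ℝ) (t : ℕ)
    (hv : ∀ τ, t+1 ≤ τ → τ ≤ T → ∀ ω, 0 ≤ v τ ω) (ω : Fin (T-2) → Fin N) :
    0 ≤ contA T N δ q v t ω := by
  unfold contA
  apply Epath_nonneg q hq
  intro ω'
  apply Finset.sum_nonneg
  intro τ hτ
  rw [Finset.mem_Icc] at hτ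
  apply mul_nonneg
  · unfold discCont
    apply Finset.prod_nonneg
    intro s _
    by_cases h : t + 1 ≤ (s:ℕ)+2 ∧ (s:ℕ)+2 < τ
    · rw [if_pos h]; exact hδ _
    · rw [if_neg h]; exact zero_le_one
  · exact hv τ hτ.1 hτ.2 _

lemma contA_succ {T N : ℕ} (hT : 3 ≤ T) (δ q : Fin N → ℝ) (hq : ∑ i, q i = 1)
    (v : ℕ → (Fin (T-2) → Fin N) → ℝ) (t : ℕ) (ht1 : 1 ≤ t) (ht2 : t + 1 ≤ T - 1)
    (had : ∀ ω ω' : Fin (T-2) → Fin N,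
      (∀ s : Fin (T-2), (s:ℕ)+2 ≤ t+1 → ω s = ω' s) → v (t+1) ω = v (t+1) ω')
    (ω : Fin (T-2) → Fin N) (s0 : Fin (T-2)) (hs0 : (s0:ℕ) = t - 1) :
    contA T N δ q v t ω = ∑ i, q i * (v (t+1) (Function.update ω s0 i)
      + δ i * contA T N δ q v (t+1) (Function.update ω s0 i)) := by
  have hs0v : (s0:ℕ) + 2 = t + 1 := by omega
  unfold contA
  rw [Epath_split q hq s0]
  apply Finset.sum_congr rfl
  intro i _
  congr 1
  have key : ∀ ω' : Fin (T-2) → Fin N, splice T N t ω (Function.update ω' s0 i)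
      = splice T N (t+1) (Function.update ω s0 i) ω' := by
    intro ω'
    funext s
    unfold splice
    by_cases h1 : (s:ℕ)+2 ≤ t
    · have hne : s ≠ s0 := fun h => by rw [h] at h1; omega
      rw [if_pos h1, if_pos (by omega), Function.update_of_ne hne]
    · by_cases h2 : s = s0
      · subst h2
        rw [if_neg h1, if_pos (by omega), Function.update_self, Function.update_self]
      · have : ¬ ((s:ℕ)+2 ≤ t+1) := by
          have : (s:ℕ) ≠ t - 1 := fun h => h2 (Fin.ext (by omega))
          omega
        rw [if_neg h1, if_neg this, Function.update_of_ne h2]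
  have hint : ∀ ω' : Fin (T-2) → Fin N,
      (∑ τ ∈ Finset.Icc (t+1) T, discCont T N δ t τ (splice T N t ω (Function.update ω' s0 i))
        * v τ (splice T N t ω (Function.update ω' s0 i)))
      = v (t+1) (Function.update ω s0 i)
        + δ i * ∑ τ ∈ Finset.Icc (t+1+1) T,
            discCont T N δ (t+1) τ (splice T N (t+1) (Function.update ω s0 i) ω')
            * v τ (splice T N (t+1) (Function.update ω s0 i) ω') := by
    intro ω'
    have hins : Finset.Icc (t+1) T = insert (t+1) (Finset.Icc (t+1+1) T) := by
      ext x; simp only [Finset.mem_Icc, Finset.mem_insert]; omega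
    rw [key ω', hins, Finset.sum_insert (by simp only [Finset.mem_Icc]; omega)]
    set Y := splice T N (t+1) (Function.update ω s0 i) ω' with hY
    have hYs0 : Y s0 = i := by
      rw [hY]; unfold splice
      rw [if_pos (by omega), Function.update_self]
    congr 1
    · -- the τ = t+1 term
      have h1 : discCont T N δ t (t+1) Y = 1 := by
        unfold discCont
        apply Finset.prod_eq_one
        intro s _
        rw [if_neg (by omega)]
      rw [h1, one_mul]
      apply had
      intro s hs
      rw [hY]; unfold splice; rw [if_pos hs]
    · -- the τ ≥ t+2 terms
      rw [Finset.mul_sum]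
      apply Finset.sum_congr rfl
      intro τ hτ
      rw [Finset.mem_Icc] at hτ
      have hd : discCont T N δ t τ Y = δ i * discCont T N δ (t+1) τ Y := by
        unfold discCont
        have hfg : (fun s : Fin (T-2) => if t + 1 ≤ (s:ℕ)+2 ∧ (s:ℕ)+2 < τ then δ (Y s) else 1)
            = Function.update (fun s : Fin (T-2) =>
                if t+1+1 ≤ (s:ℕ)+2 ∧ (s:ℕ)+2 < τ then δ (Y s) else 1) s0 (δ i) := by
          funext s
          by_cases h2 : s = s0
          · subst h2
            rw [Function.update_self, if_pos (by omega), hYs0]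
          · have : (s:ℕ) ≠ t - 1 := fun h => h2 (Fin.ext (by omega))
            rw [Function.update_of_ne h2]
            by_cases h3 : t+1+1 ≤ (s:ℕ)+2 ∧ (s:ℕ)+2 < τ
            · rw [if_pos (by omega), if_pos h3]
            · rw [if_neg (by omega), if_neg h3]
        rw [hfg, Finset.prod_update_of_mem (Finset.mem_univ s0)]
        congr 1
        have hcalc := Finset.prod_eq_mul_prod_sdiff_singleton_of_mem (Finset.mem_univ s0)
          (fun s : Fin (T-2) => if t+1+1 ≤ (s:ℕ)+2 ∧ (s:ℕ)+2 < τ then δ (Y s) else 1)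
        rw [if_neg (by omega)] at hcalc
        rw [hcalc, one_mul]
      rw [hd]; ring
  rw [Epath_congr q hint, Epath_add, Epath_const q hq, Epath_smul]

end S6
namespace S6

open Finset

/-- There is a report of the high type at a date `≤ t` recorded in `ω`. -/
def hasHigh (T t : ℕ) (ω : Fin (T-2) → Fin 2) : Prop :=
  ∃ s : Fin (T-2), (s:ℕ)+2 ≤ t ∧ ω s = 1

instance (T t : ℕ) (ω : Fin (T-2) → Fin 2) : Decidable (hasHigh T t ω) := by
  unfold hasHigh; infer_instance

/-- The date of the first high report (recorded up to date `t`). -/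
noncomputable def QK (T t : ℕ) (ω : Fin (T-2) → Fin 2) : ℕ :=
  sInf {k : ℕ | ∃ s : Fin (T-2), (s:ℕ)+2 ≤ t ∧ ω s = 1 ∧ (s:ℕ)+2 = k}

/-- The modified mechanism: along all-low histories pay `Lf`, after a first
high report at date `k` pay nothing until date `T` and then pay `x k`. -/
noncomputable def Qv (T : ℕ) (Lf x : ℕ → ℝ) (t : ℕ) (ω : Fin (T-2) → Fin 2) : ℝ :=
  if hasHigh T t ω then (if t = T then x (QK T t ω) else 0) else Lf t

lemma fin2_cases (i : Fin 2) : i = 0 ∨ i = 1 := by omega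

lemma QK_eq {T t : ℕ} {ω : Fin (T-2) → Fin 2} (s1 : Fin (T-2))
    (h1 : ω s1 = 1) (h2 : (s1:ℕ)+2 ≤ t) (hmin : ∀ s : Fin (T-2), (s:ℕ) < (s1:ℕ) → ω s ≠ 1) :
    QK T t ω = (s1:ℕ)+2 := by
  unfold QK
  apply le_antisymm
  · exact Nat.sInf_le (show (s1:ℕ)+2 ∈ {k : ℕ | ∃ s : Fin (T-2), (s:ℕ)+2 ≤ t ∧ ω s = 1 ∧ (s:ℕ)+2 = k} from ⟨s1, h2, h1, rfl⟩)
  · apply le_csInf ⟨(s1:ℕ)+2, show (s1:ℕ)+2 ∈ {k : ℕ | ∃ s : Fin (T-2), (s:ℕ)+2 ≤ t ∧ ω s = 1 ∧ (s:ℕ)+2 = k} from ⟨s1, h2, h1, rfl⟩⟩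
    rintro k ⟨s, hs1, hs2, rfl⟩
    have : ¬ ((s:ℕ) < (s1:ℕ)) := fun h => hmin s h hs2
    omega

lemma Qv_low {T : ℕ} (Lf x : ℕ → ℝ) (t : ℕ) (ω : Fin (T-2) → Fin 2)
    (h : ∀ s : Fin (T-2), (s:ℕ)+2 ≤ t → ω s = 0) : Qv T Lf x t ω = Lf t := by
  unfold Qv
  rw [if_neg]
  rintro ⟨s, hs1, hs2⟩
  rw [h s hs1] at hs2
  exact absurd hs2 (by decide)

lemma Qv_mid {T : ℕ} (Lf x : ℕ → ℝ) (t : ℕ) (htT : t ≠ T) (ω : Fin (T-2) → Fin 2)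
    (h : hasHigh T t ω) : Qv T Lf x t ω = 0 := by
  unfold Qv
  rw [if_pos h, if_neg htT]

lemma Qv_top {T : ℕ} (hT : 3 ≤ T) (Lf x : ℕ → ℝ) (ω : Fin (T-2) → Fin 2) (s1 : Fin (T-2))
    (h1 : ω s1 = 1) (hmin : ∀ s : Fin (T-2), (s:ℕ) < (s1:ℕ) → ω s = 0) :
    Qv T Lf x T ω = x ((s1:ℕ)+2) := by
  have hh : hasHigh T T ω := ⟨s1, by have := s1.isLt; omega, h1⟩
  unfold Qv
  rw [if_pos hh, if_pos rfl, QK_eq s1 h1 (by have := s1.isLt; omega)]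
  intro s hs hcon
  rw [hmin s hs] at hcon
  exact absurd hcon (by decide)

lemma exists_min_fin {n : ℕ} (P : Fin n → Prop) (h : ∃ s, P s) :
    ∃ s, P s ∧ ∀ s' : Fin n, (s':ℕ) < (s:ℕ) → ¬ P s' := by
  classical
  obtain ⟨s1, hs1⟩ := h
  set F := Finset.univ.filter P with hF
  have hne : F.Nonempty := ⟨s1, by simp [hF, hs1]⟩
  refine ⟨F.min' hne, ?_, ?_⟩
  · have := F.min'_mem hne; simp [hF] at this; exact this
  · intro s' hlt hP
    have : F.min' hne ≤ s' := F.min'_le s' (by simp [hF, hP])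
    have : ((F.min' hne : Fin n):ℕ) ≤ (s':ℕ) := this
    omega

lemma Qv_top_congr {T : ℕ} (hT : 3 ≤ T) (Lf x : ℕ → ℝ) (ω ω' : Fin (T-2) → Fin 2)
    (s1 : Fin (T-2)) (h1 : ω s1 = 1)
    (hag : ∀ s : Fin (T-2), (s:ℕ) ≤ (s1:ℕ) → ω s = ω' s) :
    Qv T Lf x T ω = Qv T Lf x T ω' := by
  obtain ⟨s2, hs2, hmin⟩ := exists_min_fin (fun s => ω s = 1) ⟨s1, h1⟩
  have hs21 : (s2:ℕ) ≤ (s1:ℕ) := by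
    by_contra h
    exact hmin s1 (by omega) h1
  have hmin0 : ∀ s : Fin (T-2), (s:ℕ) < (s2:ℕ) → ω s = 0 := by
    intro s hs
    rcases fin2_cases (ω s) with h | h
    · exact h
    · exact absurd h (hmin s hs)
  have hmin0' : ∀ s : Fin (T-2), (s:ℕ) < (s2:ℕ) → ω' s = 0 := by
    intro s hs
    rw [← hag s (by omega)]
    exact hmin0 s hs
  rw [Qv_top hT Lf x ω s2 hs2 hmin0, Qv_top hT Lf x ω' s2 (by rw [← hag s2 hs21]; exact hs2) hmin0']

lemma deltaAt_eq {T N : ℕ} (δ : Fin N → ℝ) (t : ℕ) (ω : Fin (T-2) → Fin N)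
    (s0 : Fin (T-2)) (h0 : (s0:ℕ)+2 = t) : deltaAt T N δ t ω = δ (ω s0) := by
  unfold deltaAt
  rw [Finset.prod_eq_single s0]
  · rw [if_pos h0]
  · intro b _ hb
    rw [if_neg]
    intro hc
    exact hb (Fin.ext (by omega))
  · intro h; exact absurd (Finset.mem_univ s0) h

/-- The backward recursion defining the target values `A`. -/
noncomputable def Bseq (T : ℕ) (δ1 m : ℝ) (Lf : ℕ → ℝ) : ℕ → ℝ
  | 0 => Lf (T-1) + δ1 * Lf T
  | (j+1) => Lf (T-1-(j+1)) + m * Bseq T δ1 m Lf j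

noncomputable def Aseq (T : ℕ) (δ1 m : ℝ) (Lf : ℕ → ℝ) (t : ℕ) : ℝ :=
  Bseq T δ1 m Lf (T-1-t)

lemma Aseq_top (T : ℕ) (δ1 m : ℝ) (Lf : ℕ → ℝ) :
    Aseq T δ1 m Lf (T-1) = Lf (T-1) + δ1 * Lf T := by
  unfold Aseq
  rw [show T-1-(T-1) = 0 by omega]
  rfl

lemma Aseq_rec (T : ℕ) (δ1 m : ℝ) (Lf : ℕ → ℝ) (t : ℕ) (h1 : 1 ≤ t) (h2 : t < T-1) :
    Aseq T δ1 m Lf t = Lf t + m * Aseq T δ1 m Lf (t+1) := by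
  unfold Aseq
  rw [show T-1-t = (T-2-t)+1 by omega]
  show Lf (T-1-(T-2-t+1)) + m * Bseq T δ1 m Lf (T-2-t) = _
  rw [show T-1-(T-2-t+1) = t by omega, show T-1-(t+1) = T-2-t by omega]

lemma Bseq_nonneg (T : ℕ) (δ1 m : ℝ) (hδ1 : 0 ≤ δ1) (hm : 0 ≤ m) (Lf : ℕ → ℝ)
    (hLf : ∀ k, 1 ≤ k → k ≤ T → 0 ≤ Lf k) (hT : 3 ≤ T) :
    ∀ j, j ≤ T-3 → 0 ≤ Bseq T δ1 m Lf j := by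
  intro j
  induction j with
  | zero =>
    intro _
    show 0 ≤ Lf (T-1) + δ1 * Lf T
    have := hLf (T-1) (by omega) (by omega)
    have := hLf T (by omega) (by omega)
    positivity
  | succ j ih =>
    intro hj
    show 0 ≤ Lf (T-1-(j+1)) + m * Bseq T δ1 m Lf j
    have h1 := hLf (T-1-(j+1)) (by omega) (by omega)
    have h2 := ih (by omega)
    positivity

end S6
theorem stmt6
    (T : ℕ) (hT : 3 ≤ T)
    (R I : ℝ) (hR : 1 ≤ R) (hI : 0 < I)
    (φ : ℝ → ℝ)
    (hφc : ContinuousOn φ (Set.Ici 0))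
    (hφm : StrictMonoOn φ (Set.Ici 0))
    (hφconv : StrictConvexOn ℝ (Set.Ici 0) φ)
    (hφd : ContDiffOn ℝ 2 φ (Set.Ioi 0))
    (hφ0 : φ 0 = 0)
    (hφtend : Filter.Tendsto (deriv φ) Filter.atTop Filter.atTop)
    (δ1 δ2 q1 q2 : ℝ) (hδ1 : 0 < δ1) (hδ12 : δ1 < δ2)
    (hq1 : 0 < q1) (hq2 : 0 < q2) (hqsum : q1 + q2 = 1)
    (P : PolicyIV T 2)
    (hP : FeasII T δ1 δ2 q1 q2 φ R I P) :
    ∃ Q : PolicyIV T 2,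
      FeasII T δ1 δ2 q1 q2 φ R I Q ∧
      -- the low-type incentive constraints hold with equality
      (∀ t : ℕ, 2 ≤ t → t ≤ T - 1 → ∀ ω ω' : Fin (T - 2) → Fin 2,
        (∀ s : Fin (T - 2), (s : ℕ) + 2 < t → ω s = ω' s) →
        (∀ s : Fin (T - 2), (s : ℕ) + 2 = t → ω s = 0 ∧ ω' s = 1) →
        Q.v t ω + δ1 * contA T 2 ![δ1, δ2] ![q1, q2] Q.v t ω =
          Q.v t ω' + δ1 * contA T 2 ![δ1, δ2] ![q1, q2] Q.v t ω') ∧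
      -- the agent's expected payoff is no lower
      payoffIV T 2 ![δ1, δ2] ![q1, q2] δ1 P ≤
        payoffIV T 2 ![δ1, δ2] ![q1, q2] δ1 Q := by
  classical
  have hδ2 : 0 < δ2 := hδ1.trans hδ12
  have h10 : δ1 ≠ 0 := ne_of_gt hδ1
  set δv : Fin 2 → ℝ := ![δ1, δ2] with hδvd
  set qv : Fin 2 → ℝ := ![q1, q2] with hqvd
  have hδv0 : δv 0 = δ1 := rfl
  have hδv1 : δv 1 = δ2 := rfl
  have hqv0 : qv 0 = q1 := rfl
  have hqv1 : qv 1 = q2 := rfl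
  have hqsum2 : ∑ i, qv i = 1 := by
    rw [Fin.sum_univ_two, hqv0, hqv1]; exact hqsum
  have hδnn : ∀ i : Fin 2, 0 ≤ δv i := by
    intro i; rcases S6.fin2_cases i with h | h <;> subst h
    · rw [hδv0]; exact hδ1.le
    · rw [hδv1]; exact hδ2.le
  have hqnn : ∀ i : Fin 2, 0 ≤ qv i := by
    intro i; rcases S6.fin2_cases i with h | h <;> subst h
    · rw [hqv0]; exact hq1.le
    · rw [hqv1]; exact hq2.le
  set zp : Fin (T-2) → Fin 2 := fun _ => (0 : Fin 2) with hzpd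
  set Lf : ℕ → ℝ := fun t => P.v t zp with hLfd
  have hLf' : ∀ k, P.v k zp = Lf k := fun k => rfl
  set mm : ℝ := q1 * δ1 + q2 * δ2 with hmmd
  have hmm0 : 0 < mm := add_pos (mul_pos hq1 hδ1) (mul_pos hq2 hδ2)
  set A : ℕ → ℝ := S6.Aseq T δ1 mm Lf with hAd
  set xv : ℕ → ℝ := fun k => A k / (δ1 * mm ^ (T-1-k)) with hxvd
  have hLnn : ∀ k, 1 ≤ k → k ≤ T → 0 ≤ Lf k := fun k h1 h2 =>
    hP.1 k (Finset.mem_Icc.2 ⟨h1, h2⟩) zp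
  have hAnn : ∀ k, 2 ≤ k → k ≤ T-1 → 0 ≤ A k := by
    intro k h1 h2
    rw [hAd]
    exact S6.Bseq_nonneg T δ1 mm hδ1.le hmm0.le Lf hLnn hT (T-1-k) (by omega)
  have hArec : ∀ t, 1 ≤ t → t < T-1 → A t = Lf t + mm * A (t+1) := by
    intro t h1 h2
    rw [hAd]
    exact S6.Aseq_rec T δ1 mm Lf t h1 h2
  have hAtop : A (T-1) = Lf (T-1) + δ1 * Lf T := by
    rw [hAd]; exact S6.Aseq_top T δ1 mm Lf
  -- adaptedness of the new mechanism
  have hadQ : ∀ t : ℕ, t ≤ T - 1 → ∀ ω ω' : Fin (T-2) → Fin 2,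
      (∀ s : Fin (T-2), (s:ℕ)+2 ≤ t → ω s = ω' s) →
      S6.Qv T Lf xv t ω = S6.Qv T Lf xv t ω' := by
    intro t ht ω ω' hag
    have hiff : S6.hasHigh T t ω ↔ S6.hasHigh T t ω' := by
      unfold S6.hasHigh
      constructor
      · rintro ⟨s, h1, h2⟩; exact ⟨s, h1, by rw [← hag s h1]; exact h2⟩
      · rintro ⟨s, h1, h2⟩; exact ⟨s, h1, by rw [hag s h1]; exact h2⟩
    have htT : t ≠ T := by omega
    unfold S6.Qv
    simp only [if_neg htT]
    exact if_congr hiff rfl rfl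
  set Q : PolicyIV T 2 := ⟨S6.Qv T Lf xv, hadQ⟩ with hQd
  have hQzp : ∀ t, S6.Qv T Lf xv t zp = Lf t := fun t =>
    S6.Qv_low Lf xv t zp (fun s _ => rfl)
  -- value of the continuation after a first high report at date t (all-low prefix)
  have claim2 : ∀ t, 2 ≤ t → t ≤ T-1 → ∀ ω : Fin (T-2) → Fin 2,
      (∀ s : Fin (T-2), (s:ℕ)+2 < t → ω s = 0) → (∀ s : Fin (T-2), (s:ℕ)+2 = t → ω s = 1) →
      contA T 2 δv qv (S6.Qv T Lf xv) t ω = A t / δ1 := by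
    intro t h2 hT1 ω hlow hhigh
    set s0 : Fin (T-2) := ⟨t-2, by omega⟩ with hs0d
    have hs0v : (s0:ℕ)+2 = t := by
      show (t-2)+2 = t
      omega
    have hω0 : ω s0 = 1 := hhigh s0 hs0v
    unfold contA
    have hint : ∀ ω'' : Fin (T-2) → Fin 2,
        (∑ τ ∈ Finset.Icc (t+1) T,
          discCont T 2 δv t τ (splice T 2 t ω ω'') * S6.Qv T Lf xv τ (splice T 2 t ω ω''))
        = xv t * ∏ s : Fin (T-2),
            (if t+1 ≤ (s:ℕ)+2 ∧ (s:ℕ)+2 < T then δv (ω'' s) else 1) := by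
      intro ω''
      set spl := splice T 2 t ω ω'' with hspld
      have hsplle : ∀ s : Fin (T-2), (s:ℕ)+2 ≤ t → spl s = ω s := by
        intro s hs; rw [hspld]; unfold splice; rw [if_pos hs]
      have hsplgt : ∀ s : Fin (T-2), ¬ ((s:ℕ)+2 ≤ t) → spl s = ω'' s := by
        intro s hs; rw [hspld]; unfold splice; rw [if_neg hs]
      have hsplhigh : spl s0 = 1 := by rw [hsplle s0 (le_of_eq hs0v)]; exact hω0
      rw [Finset.sum_eq_single_of_mem T (Finset.mem_Icc.2 ⟨by omega, le_refl T⟩)]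
      · have hvT : S6.Qv T Lf xv T spl = xv t := by
          rw [S6.Qv_top hT Lf xv spl s0 hsplhigh]
          · rw [hs0v]
          · intro s hs
            rw [hsplle s (by omega)]
            exact hlow s (by omega)
        rw [hvT]
        have hdc : discCont T 2 δv t T spl
            = ∏ s : Fin (T-2), (if t+1 ≤ (s:ℕ)+2 ∧ (s:ℕ)+2 < T then δv (ω'' s) else 1) := by
          unfold discCont
          apply Finset.prod_congr rfl
          intro s _
          by_cases hc : t+1 ≤ (s:ℕ)+2 ∧ (s:ℕ)+2 < T
          · rw [if_pos hc, if_pos hc, hsplgt s (by omega)]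
          · rw [if_neg hc, if_neg hc]
        rw [hdc, mul_comm]
      · intro τ hτ hτT
        rw [Finset.mem_Icc] at hτ
        have : S6.Qv T Lf xv τ spl = 0 :=
          S6.Qv_mid Lf xv τ hτT spl ⟨s0, by omega, hsplhigh⟩
        rw [this, mul_zero]
    rw [S6.Epath_congr qv hint, S6.Epath_smul]
    rw [S6.Epath_prod qv (fun s i => if t+1 ≤ (s:ℕ)+2 ∧ (s:ℕ)+2 < T then δv i else 1)]
    have hval : ∀ s : Fin (T-2),
        (∑ i, qv i * (if t+1 ≤ (s:ℕ)+2 ∧ (s:ℕ)+2 < T then δv i else 1))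
        = (if t-1 ≤ (s:ℕ) then mm else 1) := by
      intro s
      have hiff : (t+1 ≤ (s:ℕ)+2 ∧ (s:ℕ)+2 < T) ↔ (t-1 ≤ (s:ℕ)) := by
        have := s.isLt; omega
      rw [Fin.sum_univ_two, hqv0, hqv1]
      by_cases hc : t-1 ≤ (s:ℕ)
      · rw [if_pos (hiff.2 hc), if_pos (hiff.2 hc), if_pos hc, hδv0, hδv1, hmmd]
      · rw [if_neg (fun h => hc (hiff.1 h)), if_neg (fun h => hc (hiff.1 h)), if_neg hc]
        rw [mul_one, mul_one, hqsum]
    rw [Finset.prod_congr rfl (fun s _ => hval s)]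
    have hprod : (∏ s : Fin (T-2), (if t-1 ≤ (s:ℕ) then mm else 1)) = mm ^ (T-1-t) := by
      rw [Fin.prod_univ_eq_prod_range (fun k => if t-1 ≤ k then mm else 1) (T-2)]
      rw [Finset.prod_ite, Finset.prod_const, Finset.prod_const, one_pow, mul_one]
      congr 1
      have : Finset.filter (fun k => t-1 ≤ k) (Finset.range (T-2)) = Finset.Ico (t-1) (T-2) := by
        ext k; simp only [Finset.mem_filter, Finset.mem_range, Finset.mem_Ico]; omega
      rw [this, Nat.card_Ico]
      omega
    rw [hprod, hxvd]
    have hmp : (0:ℝ) < mm ^ (T-1-t) := pow_pos hmm0 _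
    field_simp
  -- the all-low continuation values of Q
  have claim1 : ∀ j t, 1 ≤ t → t + j = T-1 →
      Lf t + δ1 * contA T 2 δv qv (S6.Qv T Lf xv) t zp = A t := by
    intro j
    induction j with
    | zero =>
      intro t h1 ht
      have htt : t = T-1 := by omega
      subst htt
      rw [S6.contA_last hT δv qv hqsum2 (S6.Qv T Lf xv) zp, hQzp T, hAtop]
    | succ j ih =>
      intro t h1 ht
      set s0 : Fin (T-2) := ⟨t-1, by omega⟩ with hs0d
      have hrec := S6.contA_succ hT δv qv hqsum2 (S6.Qv T Lf xv) t h1 (by omega)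
        (fun ω ω' h => hadQ (t+1) (by omega) ω ω' h) zp s0 rfl
      rw [hrec, Fin.sum_univ_two]
      have hu0 : Function.update zp s0 (0 : Fin 2) = zp := Function.update_eq_self s0 zp
      set hp : Fin (T-2) → Fin 2 := Function.update zp s0 (1 : Fin 2) with hhpd
      have hs0v : (s0:ℕ)+2 = t+1 := by
        show (t-1)+2 = t+1
        omega
      have hva : S6.Qv T Lf xv (t+1) hp = 0 := by
        apply S6.Qv_mid Lf xv (t+1) (by omega) hp
        exact ⟨s0, by omega, by rw [hhpd, Function.update_self]⟩
      have hC0 : δ1 * contA T 2 δv qv (S6.Qv T Lf xv) (t+1) zp = A (t+1) - Lf (t+1) := by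
        have := ih (t+1) (by omega) (by omega)
        linarith
      have hCh : contA T 2 δv qv (S6.Qv T Lf xv) (t+1) hp = A (t+1) / δ1 := by
        apply claim2 (t+1) (by omega) (by omega) hp
        · intro s hs
          rw [hhpd, Function.update_of_ne (fun h => by rw [h] at hs; omega)]
        · intro s hs
          have : s = s0 := Fin.ext (by omega)
          rw [this, hhpd, Function.update_self]
      rw [hu0, hCh, hva, hQzp (t+1), hδv0, hδv1, hqv0, hqv1]
      rw [hArec t h1 (by omega)]
      have hd : δ1 * (δ2 * (A (t+1) / δ1)) = δ2 * A (t+1) := by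
        field_simp
      set C0 := contA T 2 δv qv (S6.Qv T Lf xv) (t+1) zp
      rw [hmmd]
      linear_combination (q1*δ1) * hC0 + q2 * hd
  -- the all-low continuation values of P are dominated
  have pbound : ∀ j t, 1 ≤ t → t + j = T-1 →
      Lf t + δ1 * contA T 2 δv qv P.v t zp ≤ A t := by
    intro j
    induction j with
    | zero =>
      intro t h1 ht
      have htt : t = T-1 := by omega
      subst htt
      rw [S6.contA_last hT δv qv hqsum2 P.v zp, hLf' T, hAtop]
    | succ j ih =>
      intro t h1 ht
      set s0 : Fin (T-2) := ⟨t-1, by omega⟩ with hs0d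
      have hrec := S6.contA_succ hT δv qv hqsum2 P.v t h1 (by omega)
        (fun ω ω' h => P.adapted (t+1) (by omega) ω ω' h) zp s0 rfl
      rw [hrec, Fin.sum_univ_two]
      have hu0 : Function.update zp s0 (0 : Fin 2) = zp := Function.update_eq_self s0 zp
      set hp : Fin (T-2) → Fin 2 := Function.update zp s0 (1 : Fin 2) with hhpd
      have hs0v : (s0:ℕ)+2 = t+1 := by
        show (t-1)+2 = t+1
        omega
      rw [hu0, hδv0, hδv1, hqv0, hqv1, hLf' (t+1)]
      set C0 := contA T 2 δv qv P.v (t+1) zp with hC0d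
      set Ch := contA T 2 δv qv P.v (t+1) hp with hChd
      set vh := P.v (t+1) hp with hvhd
      set a := Lf (t+1) + δ1 * C0 with had
      have hC0nn : 0 ≤ C0 := by
        rw [hC0d]
        apply S6.contA_nonneg δv qv hδnn hqnn P.v (t+1)
        intro τ hτ1 hτ2 ρ
        exact hP.1 τ (Finset.mem_Icc.2 ⟨by omega, hτ2⟩) ρ
      have hChnn : 0 ≤ Ch := by
        rw [hChd]
        apply S6.contA_nonneg δv qv hδnn hqnn P.v (t+1)
        intro τ hτ1 hτ2 ρ
        exact hP.1 τ (Finset.mem_Icc.2 ⟨by omega, hτ2⟩) ρ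
      have hvhnn : 0 ≤ vh := hP.1 (t+1) (Finset.mem_Icc.2 ⟨by omega, by omega⟩) hp
      have hann : 0 ≤ a := by
        have h1' := hLnn (t+1) (by omega) (by omega)
        have h2' : 0 ≤ δ1 * C0 := mul_nonneg hδ1.le hC0nn
        rw [had]
        linarith
      have hlowIC : vh + δ1 * Ch ≤ a := by
        have hic := hP.2.1 (t+1) (by omega) (by omega) zp hp
          (fun s hs => (Function.update_of_ne (fun h => by rw [h] at hs; omega) _ zp).symm)
        rw [S6.deltaAt_eq δv (t+1) zp s0 hs0v] at hic
        have hz0 : zp s0 = 0 := rfl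
        rw [hz0, hδv0, hLf' (t+1)] at hic
        rw [had, hC0d, hChd, hvhd]
        exact hic
      have r1 : 1 ≤ δ2/δ1 := (one_le_div hδ1).2 hδ12.le
      have k1 : vh + δ2 * Ch ≤ (δ2/δ1) * (vh + δ1 * Ch) := by
        have e : (δ2/δ1) * (vh + δ1*Ch) = (δ2/δ1)*vh + δ2*Ch := by
          field_simp
        rw [e]
        have := le_mul_of_one_le_left hvhnn r1
        linarith
      have k2 : (δ2/δ1) * (vh + δ1*Ch) ≤ (δ2/δ1) * a :=
        mul_le_mul_of_nonneg_left hlowIC (by positivity)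
      have k3 : vh + δ2 * Ch ≤ (δ2/δ1) * a := k1.trans k2
      have step1 : q1 * a + q2 * (vh + δ2*Ch) ≤ q1 * a + q2 * ((δ2/δ1) * a) :=
        add_le_add_right (mul_le_mul_of_nonneg_left k3 hq2.le) _
      have e2 : δ1 * (q1 * a + q2 * ((δ2/δ1) * a)) = mm * a := by
        rw [hmmd]
        field_simp
      have m1 : δ1 * (q1 * a + q2 * (vh + δ2 * Ch))
          ≤ δ1 * (q1 * a + q2 * ((δ2/δ1) * a)) :=
        mul_le_mul_of_nonneg_left step1 hδ1.le
      have ha' : a ≤ A (t+1) := by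
        rw [had, hC0d]
        exact ih (t+1) (by omega) (by omega)
      have m2 : mm * a ≤ mm * A (t+1) := mul_le_mul_of_nonneg_left ha' hmm0.le
      rw [hArec t h1 (by omega)]
      have final : δ1 * (q1 * a + q2 * (vh + δ2 * Ch)) ≤ mm * A (t+1) := by
        calc δ1 * (q1 * a + q2 * (vh + δ2 * Ch))
            ≤ δ1 * (q1 * a + q2 * ((δ2/δ1) * a)) := m1
          _ = mm * a := e2
          _ ≤ mm * A (t+1) := m2
      exact add_le_add_right final (Lf t)
  -- the payoff of any policy in terms of its date-1 continuation
  have payoff_eq : ∀ W : PolicyIV T 2,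
      payoffIV T 2 δv qv δ1 W = W.v 1 zp + δ1 * contA T 2 δv qv W.v 1 zp := by
    intro W
    have h1 : ∀ ω, W.v 1 ω = W.v 1 zp := fun ω =>
      W.adapted 1 (by omega) ω zp (fun s hs => absurd hs (by omega))
    have hsp : ∀ ω' : Fin (T-2) → Fin 2, splice T 2 1 zp ω' = ω' := by
      intro ω'; funext s; unfold splice; rw [if_neg (by omega)]
    have hdc : ∀ τ (ω' : Fin (T-2) → Fin 2), discCont T 2 δv 1 τ ω' = discIV T 2 δv τ ω' := by
      intro τ ω'
      unfold discCont discIV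
      apply Finset.prod_congr rfl
      intro s _
      exact if_congr (by omega) rfl rfl
    have hint : ∀ ω : Fin (T-2) → Fin 2,
        (W.v 1 ω + δ1 * ∑ t ∈ Finset.Icc 2 T, discIV T 2 δv t ω * W.v t ω)
        = W.v 1 zp + δ1 * (∑ τ ∈ Finset.Icc (1+1) T,
            discCont T 2 δv 1 τ (splice T 2 1 zp ω) * W.v τ (splice T 2 1 zp ω)) := by
      intro ω
      rw [h1 ω, hsp ω]
      congr 1
      congr 1
      apply Finset.sum_congr rfl
      intro τ _
      rw [hdc τ ω]
    show Epath T 2 qv _ = _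
    rw [S6.Epath_congr qv hint, S6.Epath_add, S6.Epath_const qv hqsum2, S6.Epath_smul]
    rfl
  -- continuation after a high report in the strict prefix does not depend on later coordinates
  have claimPre : ∀ t, 2 ≤ t → t ≤ T-1 → ∀ ω ω' : Fin (T-2) → Fin 2,
      (∀ s : Fin (T-2), (s:ℕ)+2 < t → ω s = ω' s) →
      (∃ s1 : Fin (T-2), (s1:ℕ)+2 < t ∧ ω s1 = 1) →
      contA T 2 δv qv (S6.Qv T Lf xv) t ω = contA T 2 δv qv (S6.Qv T Lf xv) t ω' := by
    intro t h2 hT1 ω ω' hag hpre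
    obtain ⟨s1, hs1, hω1⟩ := hpre
    unfold contA
    apply S6.Epath_congr
    intro ω''
    set spl := splice T 2 t ω ω'' with hspld
    set spl' := splice T 2 t ω' ω'' with hspld'
    have hsplle : ∀ s : Fin (T-2), (s:ℕ)+2 ≤ t → spl s = ω s := by
      intro s hs; rw [hspld]; unfold splice; rw [if_pos hs]
    have hsplle' : ∀ s : Fin (T-2), (s:ℕ)+2 ≤ t → spl' s = ω' s := by
      intro s hs; rw [hspld']; unfold splice; rw [if_pos hs]
    have hsplgt : ∀ s : Fin (T-2), ¬ ((s:ℕ)+2 ≤ t) → spl s = ω'' s := by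
      intro s hs; rw [hspld]; unfold splice; rw [if_neg hs]
    have hsplgt' : ∀ s : Fin (T-2), ¬ ((s:ℕ)+2 ≤ t) → spl' s = ω'' s := by
      intro s hs; rw [hspld']; unfold splice; rw [if_neg hs]
    have hh : spl s1 = 1 := by rw [hsplle s1 (by omega)]; exact hω1
    have hh' : spl' s1 = 1 := by
      rw [hsplle' s1 (by omega), ← hag s1 hs1]; exact hω1
    apply Finset.sum_congr rfl
    intro τ hτ
    rw [Finset.mem_Icc] at hτ
    have hdisc : discCont T 2 δv t τ spl = discCont T 2 δv t τ spl' := by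
      unfold discCont
      apply Finset.prod_congr rfl
      intro s _
      by_cases hc : t+1 ≤ (s:ℕ)+2 ∧ (s:ℕ)+2 < τ
      · rw [if_pos hc, if_pos hc, hsplgt s (by omega), hsplgt' s (by omega)]
      · rw [if_neg hc, if_neg hc]
    by_cases hτT : τ = T
    · subst hτT
      rw [hdisc]
      congr 1
      apply S6.Qv_top_congr hT Lf xv spl spl' s1 hh
      intro s hs
      rw [hsplle s (by omega), hsplle' s (by omega)]
      exact hag s (by omega)
    · rw [S6.Qv_mid Lf xv τ hτT spl ⟨s1, by omega, hh⟩,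
        S6.Qv_mid Lf xv τ hτT spl' ⟨s1, by omega, hh'⟩, mul_zero, mul_zero]
  -- values and continuations at a date with an all-low strict prefix
  have hkeyv : ∀ t, 2 ≤ t → t ≤ T-1 → ∀ ρ : Fin (T-2) → Fin 2,
      (∀ s : Fin (T-2), (s:ℕ)+2 < t → ρ s = 0) →
      ∀ s0 : Fin (T-2), (s0:ℕ)+2 = t →
      (ρ s0 = 0 → S6.Qv T Lf xv t ρ = Lf t
        ∧ contA T 2 δv qv (S6.Qv T Lf xv) t ρ = (A t - Lf t)/δ1)
      ∧ (ρ s0 = 1 → S6.Qv T Lf xv t ρ = 0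
        ∧ contA T 2 δv qv (S6.Qv T Lf xv) t ρ = A t/δ1) := by
    intro t h2 hT1 ρ hρ s0 hs0
    constructor
    · intro h0
      have hall : ∀ s : Fin (T-2), (s:ℕ)+2 ≤ t → ρ s = 0 := by
        intro s hs
        rcases Nat.lt_or_ge ((s:ℕ)+2) t with h | h
        · exact hρ s h
        · have : s = s0 := Fin.ext (by omega)
          rw [this]; exact h0
      refine ⟨S6.Qv_low Lf xv t ρ hall, ?_⟩
      have hcg : contA T 2 δv qv (S6.Qv T Lf xv) t ρ = contA T 2 δv qv (S6.Qv T Lf xv) t zp :=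
        S6.contA_congr δv qv (S6.Qv T Lf xv) t (fun s hs => by rw [hall s hs])
      rw [hcg, eq_div_iff h10]
      have hc1 := claim1 (T-1-t) t (by omega) (by omega)
      linarith
    · intro h1'
      refine ⟨S6.Qv_mid Lf xv t (by omega) ρ ⟨s0, by omega, h1'⟩, ?_⟩
      exact claim2 t h2 hT1 ρ hρ (fun s hs => by
        rw [show s = s0 from Fin.ext (by omega)]; exact h1')
  -- all incentive constraints hold for Q
  have hICQ : ICIV T 2 δv qv Q := by
    intro t h2 hT1 ω ω' hag
    show S6.Qv T Lf xv t ω' + deltaAt T 2 δv t ω * contA T 2 δv qv (S6.Qv T Lf xv) t ω'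
      ≤ S6.Qv T Lf xv t ω + deltaAt T 2 δv t ω * contA T 2 δv qv (S6.Qv T Lf xv) t ω
    set s0 : Fin (T-2) := ⟨t-2, by omega⟩ with hs0d
    have hs0v : (s0:ℕ)+2 = t := by show (t-2)+2 = t; omega
    have hdA : deltaAt T 2 δv t ω = δv (ω s0) := S6.deltaAt_eq δv t ω s0 hs0v
    by_cases hpre : ∃ s1 : Fin (T-2), (s1:ℕ)+2 < t ∧ ω s1 = 1
    · obtain ⟨s1, hs1, hω1⟩ := hpre
      rw [S6.Qv_mid Lf xv t (by omega) ω ⟨s1, by omega, hω1⟩,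
          S6.Qv_mid Lf xv t (by omega) ω' ⟨s1, by omega, by rw [← hag s1 hs1]; exact hω1⟩,
          claimPre t h2 hT1 ω ω' hag ⟨s1, hs1, hω1⟩]
    · push_neg at hpre
      have hlow : ∀ s : Fin (T-2), (s:ℕ)+2 < t → ω s = 0 := by
        intro s hs
        rcases S6.fin2_cases (ω s) with h | h
        · exact h
        · exact absurd h (hpre s hs)
      have hlow' : ∀ s : Fin (T-2), (s:ℕ)+2 < t → ω' s = 0 := fun s hs => by
        rw [← hag s hs]; exact hlow s hs
      have hkω := hkeyv t h2 hT1 ω hlow s0 hs0v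
      have hkω' := hkeyv t h2 hT1 ω' hlow' s0 hs0v
      have hLt : 0 ≤ Lf t := hLnn t (by omega) (by omega)
      have ed : δ1 * ((A t - Lf t)/δ1) = A t - Lf t := by field_simp
      have ed2 : δ1 * (A t/δ1) = A t := by field_simp
      rcases S6.fin2_cases (ω s0) with h | h <;> rcases S6.fin2_cases (ω' s0) with h' | h'
      · obtain ⟨hv1, hc1⟩ := hkω.1 h
        obtain ⟨hv2, hc2⟩ := hkω'.1 h'
        rw [hv1, hc1, hv2, hc2]
      · obtain ⟨hv1, hc1⟩ := hkω.1 h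
        obtain ⟨hv2, hc2⟩ := hkω'.2 h'
        rw [hv1, hc1, hv2, hc2, hdA, h, hδv0, ed, ed2]
        linarith
      · obtain ⟨hv1, hc1⟩ := hkω.2 h
        obtain ⟨hv2, hc2⟩ := hkω'.1 h'
        rw [hv1, hc1, hv2, hc2, hdA, h, hδv1]
        have e3 : δ2*(A t/δ1) - δ2*((A t - Lf t)/δ1) = (δ2/δ1)*Lf t := by
          field_simp
          ring
        have e4 : Lf t ≤ (δ2/δ1)*Lf t :=
          le_mul_of_one_le_left hLt ((one_le_div hδ1).2 hδ12.le)
        linarith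
      · obtain ⟨hv1, hc1⟩ := hkω.2 h
        obtain ⟨hv2, hc2⟩ := hkω'.2 h'
        rw [hv1, hc1, hv2, hc2]
  refine ⟨Q, ⟨?_, hICQ, ?_⟩, ?_, ?_⟩
  · -- nonnegativity
    intro t ht ρ
    rw [Finset.mem_Icc] at ht
    show 0 ≤ S6.Qv T Lf xv t ρ
    unfold S6.Qv
    split_ifs with hh1 hh2
    · obtain ⟨s2, hs2, hmin⟩ := S6.exists_min_fin (fun s => (s:ℕ)+2 ≤ t ∧ ρ s = 1) hh1
      have hQK : S6.QK T t ρ = (s2:ℕ)+2 :=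
        S6.QK_eq s2 hs2.2 hs2.1 (fun s hs hcon => hmin s hs ⟨by omega, hcon⟩)
      rw [hQK]
      show (0:ℝ) ≤ A ((s2:ℕ)+2) / (δ1 * mm ^ (T-1-((s2:ℕ)+2)))
      apply div_nonneg (hAnn ((s2:ℕ)+2) (by omega) (by have := s2.isLt; omega))
      positivity
    · exact le_refl 0
    · exact hLnn t ht.1 ht.2
  · -- break-even
    have hcost : costII T φ R Q = costII T φ R P := by
      unfold costII
      apply Finset.sum_congr rfl
      intro t _
      congr 1
      congr 1
      exact (hQzp t).trans (hLf' t).symm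
    rw [hcost]
    exact hP.2.2
  · -- binding low-type constraints
    intro t h2 hT1 ω ω' hag hts
    show S6.Qv T Lf xv t ω + δ1 * contA T 2 δv qv (S6.Qv T Lf xv) t ω
      = S6.Qv T Lf xv t ω' + δ1 * contA T 2 δv qv (S6.Qv T Lf xv) t ω'
    set s0 : Fin (T-2) := ⟨t-2, by omega⟩ with hs0d
    have hs0v : (s0:ℕ)+2 = t := by show (t-2)+2 = t; omega
    by_cases hpre : ∃ s1 : Fin (T-2), (s1:ℕ)+2 < t ∧ ω s1 = 1
    · obtain ⟨s1, hs1, hω1⟩ := hpre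
      rw [S6.Qv_mid Lf xv t (by omega) ω ⟨s1, by omega, hω1⟩,
          S6.Qv_mid Lf xv t (by omega) ω' ⟨s1, by omega, by rw [← hag s1 hs1]; exact hω1⟩,
          claimPre t h2 hT1 ω ω' hag ⟨s1, hs1, hω1⟩]
    · push_neg at hpre
      have hlow : ∀ s : Fin (T-2), (s:ℕ)+2 < t → ω s = 0 := by
        intro s hs
        rcases S6.fin2_cases (ω s) with h | h
        · exact h
        · exact absurd h (hpre s hs)
      have hlow' : ∀ s : Fin (T-2), (s:ℕ)+2 < t → ω' s = 0 := fun s hs => by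
        rw [← hag s hs]; exact hlow s hs
      obtain ⟨hv1, hc1⟩ := (hkeyv t h2 hT1 ω hlow s0 hs0v).1 (hts s0 hs0v).1
      obtain ⟨hv2, hc2⟩ := (hkeyv t h2 hT1 ω' hlow' s0 hs0v).2 (hts s0 hs0v).2
      rw [hv1, hc1, hv2, hc2]
      have ed : δ1 * ((A t - Lf t)/δ1) = A t - Lf t := by field_simp
      have ed2 : δ1 * (A t/δ1) = A t := by field_simp
      rw [ed, ed2]
      ring
  · -- payoff comparison
    rw [payoff_eq P, payoff_eq Q]
    have hq1e : Q.v 1 zp = Lf 1 := hQzp 1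
    have hp1e : P.v 1 zp = Lf 1 := hLf' 1
    rw [hq1e, hp1e]
    have h1 := pbound (T-2) 1 (le_refl 1) (by omega)
    have h2' := claim1 (T-2) 1 (le_refl 1) (by omega)
    have hcc : contA T 2 δv qv Q.v 1 zp = contA T 2 δv qv (S6.Qv T Lf xv) 1 zp := rfl
    rw [hcc]
    linarith
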